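/- arXiv:1602.02949 — 2 statements merged into one kernel-verified Lean document; each statement's English description precedes it below -/
import Mathlib

section
/- If G' is the cubic graph obtained from a cubic graph G by replacing every vertex with a triangle (the truncation), then the oddness of G' is at most the weak oddness of G: ω(G') ≤ ω_w(G). -/
open SimpleGraph

attribute [local instance] Classical.propDecidable

/-- A cubic graph: every vertex has degree 3. -/
noncomputable def IsCubic {V : Type*} [Fintype V] (G : SimpleGraph V) : Prop :=
  ∀ v, G.degree v = 3

/-- A bridgeless graph: no edge is a bridge. -/
def Bridgeless {V : Type*} (G : SimpleGraph V) : Prop :=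
  ∀ e ∈ G.edgeSet, ¬ G.IsBridge e

/-- The number of connected components with an odd number of vertices. -/
noncomputable def oddComponents {V : Type*} (H : SimpleGraph V) : ℕ :=
  Nat.card {c : H.ConnectedComponent // Odd (Nat.card c.supp)}

/-- A 2-factor of `G`: a spanning subgraph with all degrees 2. -/
noncomputable def IsTwoFactor {V : Type*} [Fintype V] (G H : SimpleGraph V) : Prop :=
  H ≤ G ∧ ∀ v, H.degree v = 2

/-- An even factor of `G`: a spanning subgraph with all degrees even. -/
noncomputable def IsEvenFactor {V : Type*} [Fintype V] (G H : SimpleGraph V) : Prop :=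
  H ≤ G ∧ ∀ v, Even (H.degree v)

/-- Oddness: least number of odd components (odd circuits) in a 2-factor. -/
noncomputable def oddness {V : Type*} [Fintype V] (G : SimpleGraph V) : ℕ :=
  sInf {n | ∃ H : SimpleGraph V, IsTwoFactor G H ∧ _root_.oddComponents H = n}

/-- Weak oddness: least number of odd components in an even factor. -/
noncomputable def weakOddness {V : Type*} [Fintype V] (G : SimpleGraph V) : ℕ :=
  sInf {n | ∃ H : SimpleGraph V, IsEvenFactor G H ∧ _root_.oddComponents H = n}

/-- A proper 3-edge-colouring exists. -/
def ThreeEdgeColourable {V : Type*} (G : SimpleGraph V) : Prop :=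
  ∃ f : Sym2 V → Fin 3, ∀ e₁ ∈ G.edgeSet, ∀ e₂ ∈ G.edgeSet,
    e₁ ≠ e₂ → (∃ v, v ∈ e₁ ∧ v ∈ e₂) → f e₁ ≠ f e₂

/-- Resistance (edge version): least number of edges whose deletion leaves a
3-edge-colourable graph. -/
noncomputable def eResistance {V : Type*} [Fintype V] (G : SimpleGraph V) : ℕ :=
  sInf {n | ∃ s : Set (Sym2 V), s ⊆ G.edgeSet ∧ Nat.card s = n ∧
    ThreeEdgeColourable (G.deleteEdges s)}

/-- Resistance (vertex version): least number of vertices whose deletion leaves a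
3-edge-colourable graph. -/
noncomputable def vResistance {V : Type*} [Fintype V] (G : SimpleGraph V) : ℕ :=
  sInf {n | ∃ s : Set V, Nat.card s = n ∧ ThreeEdgeColourable (G.induce sᶜ)}

/-- The truncation of `G`: every vertex replaced by a triangle (for cubic `G`). -/
def truncation {V : Type*} (G : SimpleGraph V) :
    SimpleGraph {p : V × V // G.Adj p.1 p.2} :=
  SimpleGraph.fromRel (fun x y =>
    x.1.1 = y.1.1 ∨ (x.1.1 = y.1.2 ∧ x.1.2 = y.1.1))

section TruncationAux

variable {V : Type*} [Fintype V] (G H : SimpleGraph V)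

/-- The lift of an even factor `H` of `G` to a 2-factor of the truncation. -/
def liftFactor : SimpleGraph {p : V × V // G.Adj p.1 p.2} :=
  SimpleGraph.fromRel (fun x y =>
    (x.1.1 = y.1.2 ∧ x.1.2 = y.1.1 ∧ H.Adj x.1.1 x.1.2) ∨
    (x.1.1 = y.1.1 ∧ (¬ H.Adj x.1.1 x.1.2 ∨ ¬ H.Adj y.1.1 y.1.2)))

variable {G H}

lemma liftFactor_adj {a b : {p : V × V // G.Adj p.1 p.2}} :
    (liftFactor G H).Adj a b ↔ a ≠ b ∧
      ((a.1.1 = b.1.2 ∧ a.1.2 = b.1.1 ∧ H.Adj a.1.1 a.1.2) ∨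
       (a.1.1 = b.1.1 ∧ (¬ H.Adj a.1.1 a.1.2 ∨ ¬ H.Adj b.1.1 b.1.2))) := by
  show (SimpleGraph.fromRel _).Adj a b ↔ _
  rw [SimpleGraph.fromRel_adj]
  refine and_congr_right fun hne => ⟨?_, fun h => Or.inl h⟩
  rintro (h | h)
  · exact h
  rcases h with ⟨h1, h2, h3⟩ | ⟨h1, h2⟩
  · have h3' := h3
    rw [h1, h2] at h3'
    exact Or.inl ⟨h2.symm, h1.symm, h3'.symm⟩
  · exact Or.inr ⟨h1.symm, h2.symm⟩

lemma liftFactor_le : liftFactor G H ≤ truncation G := by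
  intro a b hab
  rw [liftFactor_adj] at hab
  obtain ⟨hne, h⟩ := hab
  show (SimpleGraph.fromRel _).Adj a b
  rw [SimpleGraph.fromRel_adj]
  refine ⟨hne, Or.inl ?_⟩
  rcases h with ⟨h1, h2, _⟩ | ⟨h1, _⟩
  · exact Or.inr ⟨h1, h2⟩
  · exact Or.inl h1

lemma Hdeg (hc : IsCubic G) (hle : H ≤ G) (hev : ∀ v, Even (H.degree v)) (u : V) :
    H.degree u = 0 ∨ H.degree u = 2 := by
  have hsub : H.neighborFinset u ⊆ G.neighborFinset u := by
    intro w hw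
    rw [SimpleGraph.mem_neighborFinset] at *
    exact hle hw
  have h1 : H.degree u ≤ G.degree u := Finset.card_le_card hsub
  obtain ⟨k, hk⟩ := hev u
  have h3 := hc u
  omega

lemma Hdeg_zero {u : V} (h0 : H.degree u = 0) (w : V) : ¬ H.Adj u w := by
  intro hw
  have h : w ∈ H.neighborFinset u := (SimpleGraph.mem_neighborFinset _ _ _).mpr hw
  rw [Finset.card_eq_zero.mp h0] at h
  exact absurd h (Finset.notMem_empty w)

lemma exists_nonH (hc : IsCubic G) (hle : H ≤ G) {u : V} (h2 : H.degree u = 2) :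
    ∃ x, G.Adj u x ∧ ¬ H.Adj u x ∧ ∀ w, G.Adj u w → w ≠ x → H.Adj u w := by
  have hsub : H.neighborFinset u ⊆ G.neighborFinset u := by
    intro w hw
    rw [SimpleGraph.mem_neighborFinset] at *
    exact hle hw
  have hG3 : (G.neighborFinset u).card = 3 := hc u
  have hH2 : (H.neighborFinset u).card = 2 := h2
  have hcard : (G.neighborFinset u \ H.neighborFinset u).card = 1 := by
    rw [Finset.card_sdiff_of_subset hsub, hG3, hH2]
  obtain ⟨x, hx⟩ := Finset.card_eq_one.mp hcard
  have hxm : x ∈ G.neighborFinset u \ H.neighborFinset u := by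
    rw [hx]; exact Finset.mem_singleton_self x
  rw [Finset.mem_sdiff] at hxm
  refine ⟨x, (SimpleGraph.mem_neighborFinset _ _ _).mp hxm.1,
    fun h => hxm.2 ((SimpleGraph.mem_neighborFinset _ _ _).mpr h), ?_⟩
  intro w hw hwx
  by_contra hnH
  have : w ∈ G.neighborFinset u \ H.neighborFinset u := by
    rw [Finset.mem_sdiff]
    exact ⟨(SimpleGraph.mem_neighborFinset _ _ _).mpr hw,
      fun h => hnH ((SimpleGraph.mem_neighborFinset _ _ _).mp h)⟩
  rw [hx, Finset.mem_singleton] at this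
  exact hwx this

lemma liftFactor_degree (hc : IsCubic G) (hle : H ≤ G) (hev : ∀ v, Even (H.degree v))
    (a : {p : V × V // G.Adj p.1 p.2}) : (liftFactor G H).degree a = 2 := by
  obtain ⟨⟨u, v⟩, huv⟩ := a
  show ((liftFactor G H).neighborFinset _).card = 2
  rcases Hdeg hc hle hev u with h0 | h2
  · have hA := Hdeg_zero (H := H) (u := u) h0
    have h3 : (G.neighborFinset u).card = 3 := hc u
    have hvmem : v ∈ G.neighborFinset u := (SimpleGraph.mem_neighborFinset _ _ _).mpr huv
    have hcard2 : ((G.neighborFinset u).erase v).card = 2 := by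
      rw [Finset.card_erase_of_mem hvmem, h3]
    obtain ⟨w1, w2, hw12, hset⟩ := Finset.card_eq_two.mp hcard2
    have hw1 : w1 ∈ (G.neighborFinset u).erase v := by rw [hset]; simp
    have hw2 : w2 ∈ (G.neighborFinset u).erase v := by rw [hset]; simp
    obtain ⟨hw1v, hw1G⟩ := Finset.mem_erase.mp hw1
    obtain ⟨hw2v, hw2G⟩ := Finset.mem_erase.mp hw2
    rw [SimpleGraph.mem_neighborFinset] at hw1G hw2G
    have hnb : (liftFactor G H).neighborFinset ⟨(u, v), huv⟩ =
        {⟨(u, w1), hw1G⟩, ⟨(u, w2), hw2G⟩} := by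
      ext ⟨⟨p, q⟩, hpq⟩
      rw [SimpleGraph.mem_neighborFinset, liftFactor_adj, Finset.mem_insert,
        Finset.mem_singleton]
      constructor
      · rintro ⟨hne, ⟨h1, h2', h3'⟩ | ⟨h1, _⟩⟩
        · exact absurd h3' (hA v)
        · have hp : u = p := h1
          subst hp
          have hq : q ∈ (G.neighborFinset u).erase v := by
            rw [Finset.mem_erase, SimpleGraph.mem_neighborFinset]
            exact ⟨fun hqv => hne (by subst hqv; rfl), hpq⟩
          rw [hset] at hq
          rcases Finset.mem_insert.mp hq with h | h
          · exact Or.inl (by subst h; rfl)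
          · exact Or.inr (by rw [Finset.mem_singleton] at h; subst h; rfl)
      · rintro (h | h) <;> rw [h] <;> refine ⟨?_, Or.inr ⟨rfl, Or.inl (hA v)⟩⟩
        · exact fun he => hw1v (congrArg (fun z => z.1.2) he).symm
        · exact fun he => hw2v (congrArg (fun z => z.1.2) he).symm
    rw [hnb]
    exact Finset.card_pair (fun he => hw12 (congrArg (fun z => z.1.2) he))
  · obtain ⟨x, hxG, hxH, hxall⟩ := exists_nonH hc hle h2
    by_cases hv1 : H.Adj u v
    · have hvx : v ≠ x := fun h => hxH (h ▸ hv1)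
      have hnb : (liftFactor G H).neighborFinset ⟨(u, v), huv⟩ =
          {⟨(v, u), huv.symm⟩, ⟨(u, x), hxG⟩} := by
        ext ⟨⟨p, q⟩, hpq⟩
        rw [SimpleGraph.mem_neighborFinset, liftFactor_adj, Finset.mem_insert,
          Finset.mem_singleton]
        constructor
        · rintro ⟨hne, ⟨h1, h2', h3'⟩ | ⟨h1, hcond⟩⟩
          · exact Or.inl (by subst h1; subst h2'; rfl)
          · have hp : u = p := h1
            subst hp
            rcases hcond with hc1 | hc2
            · exact absurd hv1 hc1
            · have hq : q = x := by
                by_contra hqx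
                exact hc2 (hxall q hpq hqx)
              exact Or.inr (by subst hq; rfl)
        · rintro (h | h) <;> rw [h]
          · exact ⟨fun he => huv.ne (congrArg (fun z => z.1.1) he),
              Or.inl ⟨rfl, rfl, hv1⟩⟩
          · exact ⟨fun he => hvx (congrArg (fun z => z.1.2) he),
              Or.inr ⟨rfl, Or.inr hxH⟩⟩
      rw [hnb]
      exact Finset.card_pair (fun he => huv.ne' (congrArg (fun z => z.1.1) he))
    · have hvx : v = x := by
        by_contra h
        exact hv1 (hxall v huv h)
      have h2' : (H.neighborFinset u).card = 2 := h2
      obtain ⟨w1, w2, hw12, hNH⟩ := Finset.card_eq_two.mp h2'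
      have hw1m : w1 ∈ H.neighborFinset u := by rw [hNH]; simp
      have hw2m : w2 ∈ H.neighborFinset u := by rw [hNH]; simp
      rw [SimpleGraph.mem_neighborFinset] at hw1m hw2m
      have hw1v : w1 ≠ v := fun h => hv1 (h ▸ hw1m)
      have hw2v : w2 ≠ v := fun h => hv1 (h ▸ hw2m)
      have hnb : (liftFactor G H).neighborFinset ⟨(u, v), huv⟩ =
          {⟨(u, w1), hle hw1m⟩, ⟨(u, w2), hle hw2m⟩} := by
        ext ⟨⟨p, q⟩, hpq⟩
        rw [SimpleGraph.mem_neighborFinset, liftFactor_adj, Finset.mem_insert,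
          Finset.mem_singleton]
        constructor
        · rintro ⟨hne, ⟨h1, h2'', h3'⟩ | ⟨h1, _⟩⟩
          · exact absurd h3' hv1
          · have hp : u = p := h1
            subst hp
            have hqv : q ≠ v := fun hqv => hne (by subst hqv; rfl)
            have hqH : H.Adj u q := hxall q hpq (hvx ▸ hqv)
            have : q ∈ H.neighborFinset u := (SimpleGraph.mem_neighborFinset _ _ _).mpr hqH
            rw [hNH] at this
            rcases Finset.mem_insert.mp this with h | h
            · exact Or.inl (by subst h; rfl)
            · exact Or.inr (by rw [Finset.mem_singleton] at h; subst h; rfl)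
        · rintro (h | h) <;> rw [h] <;> refine ⟨?_, Or.inr ⟨rfl, Or.inl hv1⟩⟩
          · exact fun he => hw1v (congrArg (fun z => z.1.2) he).symm
          · exact fun he => hw2v (congrArg (fun z => z.1.2) he).symm
      rw [hnb]
      exact Finset.card_pair (fun he => hw12 (congrArg (fun z => z.1.2) he))

lemma copies_reachable (hc : IsCubic G) (hle : H ≤ G) (hev : ∀ v, Even (H.degree v))
    {a b : {p : V × V // G.Adj p.1 p.2}} (hab : a.1.1 = b.1.1) :
    (liftFactor G H).Reachable a b := by
  obtain ⟨⟨u, v⟩, huv⟩ := a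
  obtain ⟨⟨p, w⟩, hpw⟩ := b
  have hup : u = p := hab
  subst hup
  by_cases hvw : v = w
  · subst hvw
    rfl
  by_cases hH : ¬ H.Adj u v ∨ ¬ H.Adj u w
  · refine SimpleGraph.Adj.reachable (liftFactor_adj.mpr ⟨?_, Or.inr ⟨rfl, hH⟩⟩)
    exact fun he => hvw (congrArg (fun z => z.1.2) he)
  · push_neg at hH
    obtain ⟨hv, hw⟩ := hH
    have hd2 : H.degree u = 2 := by
      rcases Hdeg hc hle hev u with h0 | h2
      · exact absurd hv (Hdeg_zero h0 v)
      · exact h2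
    obtain ⟨x, hxG, hxH, _⟩ := exists_nonH hc hle hd2
    have hvx : v ≠ x := fun h => hxH (h ▸ hv)
    have hwx : w ≠ x := fun h => hxH (h ▸ hw)
    have e1 : (liftFactor G H).Adj ⟨(u, v), huv⟩ ⟨(u, x), hxG⟩ :=
      liftFactor_adj.mpr ⟨fun he => hvx (congrArg (fun z => z.1.2) he),
        Or.inr ⟨rfl, Or.inr hxH⟩⟩
    have e2 : (liftFactor G H).Adj ⟨(u, x), hxG⟩ ⟨(u, w), hpw⟩ :=
      liftFactor_adj.mpr ⟨fun he => hwx (congrArg (fun z => z.1.2) he).symm,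
        Or.inr ⟨rfl, Or.inl hxH⟩⟩
    exact e1.reachable.trans e2.reachable

lemma orig_adj (hle : H ≤ G) {u v : V} (h : H.Adj u v) :
    (liftFactor G H).Adj ⟨(u, v), hle h⟩ ⟨(v, u), (hle h).symm⟩ :=
  liftFactor_adj.mpr ⟨fun he => h.ne (congrArg (fun z => z.1.1) he),
    Or.inl ⟨rfl, rfl, h⟩⟩

lemma walk_reachable (hc : IsCubic G) (hle : H ≤ G) (hev : ∀ v, Even (H.degree v)) :
    ∀ {u w : V}, H.Walk u w → ∀ a b : {p : V × V // G.Adj p.1 p.2},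
      a.1.1 = u → b.1.1 = w → (liftFactor G H).Reachable a b := by
  intro u w p
  induction p with
  | nil =>
    intro a b ha hb
    exact copies_reachable hc hle hev (ha.trans hb.symm)
  | @cons u' x w' h p ih =>
    intro a b ha hb
    have hG : G.Adj u' x := hle h
    refine (copies_reachable hc hle hev (a := a) (b := ⟨(u', x), hG⟩) ha).trans ?_
    exact ((orig_adj hle h).reachable).trans (ih ⟨(x, u'), hG.symm⟩ b rfl hb)

lemma reach_lift (hc : IsCubic G) (hle : H ≤ G) (hev : ∀ v, Even (H.degree v))
    {u w : V} (h : H.Reachable u w) (a b : {p : V × V // G.Adj p.1 p.2})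
    (ha : a.1.1 = u) (hb : b.1.1 = w) : (liftFactor G H).Reachable a b :=
  h.elim fun p => walk_reachable hc hle hev p a b ha hb

lemma comp_eq_of_adj {a b : {p : V × V // G.Adj p.1 p.2}}
    (h : (liftFactor G H).Adj a b) :
    H.connectedComponentMk a.1.1 = H.connectedComponentMk b.1.1 := by
  rw [liftFactor_adj] at h
  rcases h.2 with ⟨h1, h2, h3⟩ | ⟨h1, _⟩
  · rw [← h2]
    exact SimpleGraph.ConnectedComponent.connectedComponentMk_eq_of_adj h3
  · rw [h1]

lemma comp_eq_of_reach {a b : {p : V × V // G.Adj p.1 p.2}}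
    (h : (liftFactor G H).Reachable a b) :
    H.connectedComponentMk a.1.1 = H.connectedComponentMk b.1.1 := by
  obtain ⟨p⟩ := h
  induction p with
  | nil => rfl
  | cons hadj _ ih => exact (comp_eq_of_adj hadj).trans ih

variable (G H) in
noncomputable def compMap :
    (liftFactor G H).ConnectedComponent → H.ConnectedComponent :=
  SimpleGraph.ConnectedComponent.lift (fun a => H.connectedComponentMk a.1.1)
    (fun _ _ p _ => comp_eq_of_reach ⟨p⟩)

lemma compMap_mk (a : {p : V × V // G.Adj p.1 p.2}) :
    compMap G H ((liftFactor G H).connectedComponentMk a) =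
      H.connectedComponentMk a.1.1 := rfl

lemma exists_adj (hc : IsCubic G) (u : V) : ∃ v, G.Adj u v := by
  have h3 := hc u
  have hpos : 0 < (G.neighborFinset u).card := by
    have h4 : (G.neighborFinset u).card = 3 := hc u
    omega
  obtain ⟨v, hv⟩ := Finset.card_pos.mp hpos
  exact ⟨v, (SimpleGraph.mem_neighborFinset _ _ _).mp hv⟩

variable (G) in
noncomputable def cp (hc : IsCubic G) (u : V) : {p : V × V // G.Adj p.1 p.2} :=
  ⟨(u, (exists_adj hc u).choose), (exists_adj hc u).choose_spec⟩

lemma oddComponents_liftFactor (hc : IsCubic G) (hle : H ≤ G)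
    (hev : ∀ v, Even (H.degree v)) :
    _root_.oddComponents (liftFactor G H) = _root_.oddComponents H := by
  classical
  have hsupp : ∀ (c : (liftFactor G H).ConnectedComponent)
      (a : {p : V × V // G.Adj p.1 p.2}),
      a ∈ c.supp ↔ a.1.1 ∈ (compMap G H c).supp := by
    intro c
    refine SimpleGraph.ConnectedComponent.ind (fun b a => ?_) c
    rw [SimpleGraph.ConnectedComponent.mem_supp_iff,
      SimpleGraph.ConnectedComponent.mem_supp_iff, compMap_mk]
    constructor
    · intro h
      exact comp_eq_of_reach (SimpleGraph.ConnectedComponent.exact h)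
    · intro h
      exact SimpleGraph.ConnectedComponent.sound
        (reach_lift hc hle hev (SimpleGraph.ConnectedComponent.exact h) a b rfl rfl)
  have hcard : ∀ c : (liftFactor G H).ConnectedComponent,
      Nat.card c.supp = 3 * Nat.card (compMap G H c).supp := by
    intro c
    have hset : c.supp = {a : {p : V × V // G.Adj p.1 p.2} |
        a.1.1 ∈ (compMap G H c).supp} := Set.ext (hsupp c)
    rw [hset]
    set D := (compMap G H c).supp with hD
    have e2 : {a : {p : V × V // G.Adj p.1 p.2} // a.1.1 ∈ D} ≃
        (Σ u : D, {w : V // G.Adj u.1 w}) :=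
      { toFun := fun a => ⟨⟨a.1.1.1, a.2⟩, ⟨a.1.1.2, a.1.2⟩⟩
        invFun := fun x => ⟨⟨(x.1.1, x.2.1), x.2.2⟩, x.1.2⟩
        left_inv := by rintro ⟨⟨⟨u, v⟩, h⟩, hm⟩; rfl
        right_inv := by rintro ⟨⟨u, hu⟩, ⟨w, hw⟩⟩; rfl }
    have h1 : Nat.card {a : {p : V × V // G.Adj p.1 p.2} | a.1.1 ∈ D} =
        Nat.card (Σ u : D, {w : V // G.Adj u.1 w}) := Nat.card_congr e2
    rw [h1, Nat.card_eq_fintype_card, Fintype.card_sigma]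
    have hfib : ∀ u : D, Fintype.card {w : V // G.Adj u.1 w} = 3 := by
      intro u
      have h : Fintype.card {w : V // G.Adj u.1 w} = G.degree u.1 := by
        rw [← SimpleGraph.card_neighborSet_eq_degree]
        exact Fintype.card_congr (Equiv.subtypeEquivRight fun w => Iff.rfl)
      rw [h, hc u.1]
    simp only [hfib, Finset.sum_const, smul_eq_mul, Finset.card_univ]
    rw [Nat.card_eq_fintype_card, mul_comm]
  refine Nat.card_congr (Equiv.subtypeEquiv
    { toFun := compMap G H
      invFun := SimpleGraph.ConnectedComponent.lift
        (fun u => (liftFactor G H).connectedComponentMk (cp G hc u))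
        (fun u w p _ => SimpleGraph.ConnectedComponent.sound
          (reach_lift hc hle hev ⟨p⟩ (cp G hc u) (cp G hc w) rfl rfl))
      left_inv := fun c => SimpleGraph.ConnectedComponent.ind
        (fun a => SimpleGraph.ConnectedComponent.sound
          (copies_reachable hc hle hev rfl)) c
      right_inv := fun d => SimpleGraph.ConnectedComponent.ind
        (fun u => rfl) d } (fun c => ?_))
  show Odd (Nat.card c.supp) ↔ Odd (Nat.card (compMap G H c).supp)
  rw [hcard c, Nat.odd_mul]
  exact ⟨fun h => h.2, fun h => ⟨⟨1, rfl⟩, h⟩⟩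

end TruncationAux

/-- The oddness of the truncation of a cubic graph `G` is at most the weak
oddness of `G`. -/
theorem stmt9 {V : Type*} [Fintype V] (G : SimpleGraph V) (hc : IsCubic G) :
    oddness (truncation G) ≤ weakOddness G := by
  have hne : {n | ∃ H : SimpleGraph V, IsEvenFactor G H ∧ _root_.oddComponents H = n}.Nonempty :=
    ⟨_root_.oddComponents (⊥ : SimpleGraph V), ⊥,
      ⟨bot_le, fun v => by
        convert (Nat.even_iff.mpr rfl : Even (0 : ℕ))
        apply Finset.card_eq_zero.mpr
        ext w
        simp⟩, rfl⟩
  have hmem : weakOddness G ∈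
      {n | ∃ H : SimpleGraph V, IsEvenFactor G H ∧ _root_.oddComponents H = n} :=
    Nat.sInf_mem hne
  obtain ⟨H, ⟨hle, hev⟩, hn⟩ := hmem
  refine Nat.sInf_le ⟨liftFactor G H, ⟨liftFactor_le, liftFactor_degree hc hle hev⟩, ?_⟩
  rw [oddComponents_liftFactor hc hle hev, hn]
end

section
/- Let P be the 2-pole obtained from the Petersen graph by subdividing an edge with a new vertex and splitting that vertex off. Then removing from P a suitable non-terminal vertex (one at distance 3 from both terminals) leaves a graph admitting a proper 3-edge-colouring in which the two terminal edges receive different colours. -/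
open SimpleGraph

attribute [local instance] Classical.propDecidable

/-- The Petersen graph as the Kneser graph K(5,2). -/
def petersen : SimpleGraph {s : Finset (Fin 5) // s.card = 2} :=
  SimpleGraph.fromRel (fun a b => Disjoint a.1 b.1)

/-- The vertex `{0,1}` of the Petersen graph. -/
def pX : {s : Finset (Fin 5) // s.card = 2} := ⟨{0, 1}, by decide⟩

/-- The vertex `{2,3}` of the Petersen graph, adjacent to `pX`. -/
def pY : {s : Finset (Fin 5) // s.card = 2} := ⟨{2, 3}, by decide⟩

/-- The 2-pole `P`: the Petersen graph with the edge `pX pY` subdivided by a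
new vertex which is then split off into the two terminals `inr 0`, `inr 1`. -/
def pole : SimpleGraph ({s : Finset (Fin 5) // s.card = 2} ⊕ Fin 2) :=
  SimpleGraph.fromRel (fun a b =>
    match a, b with
    | .inl u, .inl v =>
        Disjoint u.1 v.1 ∧ ¬((u = pX ∧ v = pY) ∨ (u = pY ∧ v = pX))
    | .inl u, .inr i => (i = 0 ∧ u = pX) ∨ (i = 1 ∧ u = pY)
    | .inr _, .inl _ => False
    | .inr _, .inr _ => False)


/-- Auxiliary: vertex type of the pole. -/
abbrev PV := ({s : Finset (Fin 5) // s.card = 2} ⊕ Fin 2)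

/-- Boolean version of the pole relation. -/
def poleB : PV → PV → Bool
  | .inl u, .inl v =>
      decide (Disjoint u.1 v.1) &&
        !((decide (u = pX) && decide (v = pY)) || (decide (u = pY) && decide (v = pX)))
  | .inl u, .inr i => (decide (i = 0) && decide (u = pX)) || (decide (i = 1) && decide (u = pY))
  | .inr _, _ => false

lemma pole_adj_iff (a b : PV) :
    pole.Adj a b ↔ a ≠ b ∧ (poleB a b = true ∨ poleB b a = true) := by
  cases a <;> cases b <;>
    simp [pole, poleB, SimpleGraph.fromRel_adj] <;> tauto

instance (priority := 2000) poleAdjDec : DecidableRel pole.Adj := fun a b =>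
  decidable_of_iff _ (pole_adj_iff a b).symm

instance (priority := 2000) pvDecEq : DecidableEq PV :=
  inferInstanceAs <| DecidableEq ({s : Finset (Fin 5) // s.card = 2} ⊕ Fin 2)

instance (priority := 2000) sym2PVDecEq : DecidableEq (Sym2 PV) :=
  inferInstanceAs <| DecidableEq (Quotient (Sym2.Rel.setoid PV))

/-- Named vertices for the walks. -/
def v34 : PV := Sum.inl ⟨({3, 4} : Finset (Fin 5)), by decide⟩
def v14 : PV := Sum.inl ⟨({1, 4} : Finset (Fin 5)), by decide⟩

lemma dist_eq_three' {V : Type*} (G : SimpleGraph V) {a d : V}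
    (w : G.Walk a d) (hw : w.length = 3) (h0 : a ≠ d) (h1 : ¬ G.Adj a d)
    (h2 : ¬ ∃ b, G.Adj a b ∧ G.Adj b d) : G.dist a d = 3 := by
  have hle : G.dist a d ≤ 3 := hw ▸ SimpleGraph.dist_le w
  rcases Nat.lt_or_ge (G.dist a d) 3 with h | h
  · exfalso
    obtain ⟨p, hp⟩ := (w.reachable).exists_walk_length_eq_dist
    have hlt : p.length < 3 := by omega
    cases p with
    | nil => exact h0 rfl
    | cons ha q =>
      cases q with
      | nil => exact h1 ha
      | cons hb r =>
        cases r with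
        | nil => exact h2 ⟨_, ha, hb⟩
        | cons hc s => simp only [SimpleGraph.Walk.length_cons] at hlt; omega
  · omega

noncomputable def fcol : Sym2 PV → Fin 3 := fun e =>
  if e = s(.inl ⟨{0, 1}, by decide⟩, .inr 0) then 0 else
  if e = s(.inl ⟨{2, 3}, by decide⟩, .inr 1) then 1 else
  if e = s(.inl ⟨{0, 1}, by decide⟩, .inl ⟨{2, 4}, by decide⟩) then 1 else
  if e = s(.inl ⟨{0, 1}, by decide⟩, .inl ⟨{3, 4}, by decide⟩) then 2 else
  if e = s(.inl ⟨{0, 3}, by decide⟩, .inl ⟨{1, 2}, by decide⟩) then 0 else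
  if e = s(.inl ⟨{0, 3}, by decide⟩, .inl ⟨{1, 4}, by decide⟩) then 1 else
  if e = s(.inl ⟨{0, 3}, by decide⟩, .inl ⟨{2, 4}, by decide⟩) then 2 else
  if e = s(.inl ⟨{0, 4}, by decide⟩, .inl ⟨{1, 2}, by decide⟩) then 2 else
  if e = s(.inl ⟨{0, 4}, by decide⟩, .inl ⟨{1, 3}, by decide⟩) then 1 else
  if e = s(.inl ⟨{0, 4}, by decide⟩, .inl ⟨{2, 3}, by decide⟩) then 0 else
  if e = s(.inl ⟨{1, 2}, by decide⟩, .inl ⟨{3, 4}, by decide⟩) then 1 else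
  if e = s(.inl ⟨{1, 3}, by decide⟩, .inl ⟨{2, 4}, by decide⟩) then 0 else
  if e = s(.inl ⟨{1, 4}, by decide⟩, .inl ⟨{2, 3}, by decide⟩) then 2 else
  0

set_option maxRecDepth 100000 in
/-- Removing from `P` a suitable non-terminal vertex at distance 3 from both
terminals leaves a graph with a proper 3-edge-colouring in which the two
terminal edges get different colours. -/
theorem stmt14 :
    ∃ u : {s : Finset (Fin 5) // s.card = 2} ⊕ Fin 2,
      (∀ i : Fin 2, u ≠ .inr i) ∧
      pole.dist u (.inr 0) = 3 ∧ pole.dist u (.inr 1) = 3 ∧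
      ∃ f : Sym2 ({s : Finset (Fin 5) // s.card = 2} ⊕ Fin 2) → Fin 3,
        (∀ e₁ ∈ pole.edgeSet, u ∉ e₁ → ∀ e₂ ∈ pole.edgeSet, u ∉ e₂ →
          e₁ ≠ e₂ → (∃ w, w ∈ e₁ ∧ w ∈ e₂) → f e₁ ≠ f e₂) ∧
        f s(.inl pX, .inr 0) ≠ f s(.inl pY, .inr 1) := by
  refine ⟨.inl ⟨{0, 2}, by decide⟩, by decide, ?_, ?_, fcol, ?_, by decide⟩
  · let w1 : pole.Walk (Sum.inl ⟨{0, 2}, by decide⟩) (.inr 0) :=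
      Walk.cons (v := v34) (by decide)
        (Walk.cons (v := .inl pX) (by decide)
          (Walk.cons (w := (.inr 0 : PV)) (by decide) Walk.nil))
    exact dist_eq_three' pole w1 (by simp [w1]) (by decide) (by decide) (by decide)
  · let w2 : pole.Walk (Sum.inl ⟨{0, 2}, by decide⟩) (.inr 1) :=
      Walk.cons (v := v14) (by decide)
        (Walk.cons (v := .inl pY) (by decide)
          (Walk.cons (w := (.inr 1 : PV)) (by decide) Walk.nil))
    exact dist_eq_three' pole w2 (by simp [w2]) (by decide) (by decide) (by decide)
  · letI iEq : DecidableEq (Sym2 PV) := sym2PVDecEq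
    letI iEx : ∀ e₁ e₂ : Sym2 PV, Decidable (∃ w, w ∈ e₁ ∧ w ∈ e₂) := fun e₁ e₂ =>
      Fintype.decidableExistsFintype
    decide
end
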